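/- Full (infinite) frequency L∞ bound via LMI (sufficiency direction of Theorem 5): Let 0 < ν < 2, φ = (π/2)(ν−1), δ > 0, and let A ∈ ℝ^{n×n}, B ∈ ℝ^{n×m}, C ∈ ℝ^{p×n}, D ∈ ℝ^{p×m}. Suppose there exists a Hermitian matrix U ∈ ℂ^{n×n} such that, with X = e^{iφ}AᵀU and Y = e^{iφ}BᵀU, the Hermitian block matrix [[Sym(X), Y*, Cᵀ],[Y, −δI_m, Dᵀ],[C, D, −δI_p]] is negative definite. Then σmax(D) < δ, and for every ω ≥ 0 the matrix ω^ν e^{iπν/2} I_n − A is invertible and σmax(C(ω^ν e^{iπν/2} I_n − A)^{−1}B + D) < δ. -/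

import Mathlib

open Matrix Complex
open scoped Matrix Kronecker ComplexOrder

/-- The largest singular value (ℓ² operator norm) of a complex matrix. -/
noncomputable def sigmaMax {m n : ℕ} (M : Matrix (Fin m) (Fin n) ℂ) : ℝ :=
  ‖LinearMap.toContinuousLinearMap (Matrix.toEuclideanLin M)‖

/-- A real matrix regarded as a complex matrix. -/
noncomputable def cmap {a b : ℕ} (M : Matrix (Fin a) (Fin b) ℝ) : Matrix (Fin a) (Fin b) ℂ :=
  M.map Complex.ofReal

/-- ρ(θ, M) = [θ,1]* M [θ,1], real-valued for Hermitian M. -/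
noncomputable def rho (θ : ℂ) (M : Matrix (Fin 2) (Fin 2) ℂ) : ℝ :=
  (star ![θ, 1] ⬝ᵥ M *ᵥ ![θ, 1]).re

/-- Δ₀ = [[0, e^{iφ}],[e^{−iφ}, 0]]. -/
noncomputable def Delta0 (φ : ℝ) : Matrix (Fin 2) (Fin 2) ℂ :=
  !![0, Complex.exp ((φ : ℂ) * Complex.I);
     Complex.exp (-(φ : ℂ) * Complex.I), 0]

/-- Σ₀ = [[α, β e^{iφ}],[β e^{−iφ}, γ]]. -/
noncomputable def Sigma0 (φ α β γ : ℝ) : Matrix (Fin 2) (Fin 2) ℂ :=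
  !![(α : ℂ), (β : ℂ) * Complex.exp ((φ : ℂ) * Complex.I);
     (β : ℂ) * Complex.exp (-(φ : ℂ) * Complex.I), (γ : ℂ)]

/-- A 3×3 block matrix. -/
noncomputable def block3 {n m p : ℕ}
    (A11 : Matrix (Fin n) (Fin n) ℂ) (A12 : Matrix (Fin n) (Fin m) ℂ)
    (A13 : Matrix (Fin n) (Fin p) ℂ)
    (A21 : Matrix (Fin m) (Fin n) ℂ) (A22 : Matrix (Fin m) (Fin m) ℂ)
    (A23 : Matrix (Fin m) (Fin p) ℂ)
    (A31 : Matrix (Fin p) (Fin n) ℂ) (A32 : Matrix (Fin p) (Fin m) ℂ)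
    (A33 : Matrix (Fin p) (Fin p) ℂ) :
    Matrix ((Fin n ⊕ Fin m) ⊕ Fin p) ((Fin n ⊕ Fin m) ⊕ Fin p) ℂ :=
  Matrix.fromBlocks (Matrix.fromBlocks A11 A12 A21 A22)
    (Matrix.fromRows A13 A23) (Matrix.fromCols A31 A32) A33

section Aux
variable {k l : Type*} [Fintype k] [Fintype l]

lemma aux_dot_conjT (M : Matrix k l ℂ) (x : l → ℂ) (z : k → ℂ) :
    star x ⬝ᵥ Mᴴ *ᵥ z = star (M *ᵥ x) ⬝ᵥ z := by
  rw [dotProduct_mulVec, ← star_mulVec]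

lemma aux_dot_conj (M : Matrix k l ℂ) (a : k → ℂ) (b : l → ℂ) :
    star b ⬝ᵥ Mᴴ *ᵥ a = star (star a ⬝ᵥ M *ᵥ b) := by
  rw [aux_dot_conjT, star_dotProduct]

lemma aux_cmap_conjT {a b : ℕ} (M : Matrix (Fin a) (Fin b) ℝ) : (cmap M)ᴴ = (cmap M)ᵀ := by
  ext i j
  simp [cmap, Matrix.conjTranspose_apply, Matrix.transpose_apply, Matrix.map_apply,
    Complex.conj_ofReal]

lemma aux_re_dot_self (v : k → ℂ) :
    (star v ⬝ᵥ v).re = ∑ i, Complex.normSq (v i) := by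
  simp only [dotProduct, Pi.star_apply, Complex.re_sum]
  exact Finset.sum_congr rfl fun i _ => by
    rw [Complex.star_def, mul_comm, Complex.mul_conj, Complex.ofReal_re]

lemma aux_re_dot_self_nonneg (v : k → ℂ) : 0 ≤ (star v ⬝ᵥ v).re := by
  rw [aux_re_dot_self]
  exact Finset.sum_nonneg fun i _ => Complex.normSq_nonneg _

lemma aux_norm_sq {a : ℕ} (v : Fin a → ℂ) :
    ‖(WithLp.equiv 2 (Fin a → ℂ)).symm v‖ ^ 2 = (star v ⬝ᵥ v).re := by
  rw [aux_re_dot_self]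
  rw [EuclideanSpace.norm_eq]
  rw [Real.sq_sqrt (by positivity)]
  exact Finset.sum_congr rfl fun i _ => by
    simp [Complex.sq_norm]

lemma aux_sigmaMax_lt {a b : ℕ} (M : Matrix (Fin a) (Fin b) ℂ) {δ : ℝ} (hδ : 0 < δ)
    (h : ∀ u : Fin b → ℂ, u ≠ 0 →
      (star (M *ᵥ u) ⬝ᵥ (M *ᵥ u)).re < δ ^ 2 * (star u ⬝ᵥ u).re) :
    sigmaMax M < δ := by
  set T := LinearMap.toContinuousLinearMap (Matrix.toEuclideanLin M) with hT
  have hTlt : ∀ x : EuclideanSpace ℂ (Fin b), x ≠ 0 → ‖T x‖ < δ * ‖x‖ := by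
    intro x hx
    have hu0 : (WithLp.equiv 2 (Fin b → ℂ)) x ≠ 0 := (WithLp.ofLp_eq_zero 2).ne.2 hx
    have h1 : ‖T x‖ ^ 2 = (star (M *ᵥ (WithLp.equiv 2 (Fin b → ℂ)) x) ⬝ᵥ
        (M *ᵥ (WithLp.equiv 2 (Fin b → ℂ)) x)).re := by
      have hx' : T x = (WithLp.equiv 2 (Fin a → ℂ)).symm
          (M *ᵥ (WithLp.equiv 2 (Fin b → ℂ)) x) := rfl
      rw [hx', aux_norm_sq]
    have h2 : ‖x‖ ^ 2 = (star ((WithLp.equiv 2 (Fin b → ℂ)) x) ⬝ᵥ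
        ((WithLp.equiv 2 (Fin b → ℂ)) x)).re := by
      have hx' : x = (WithLp.equiv 2 (Fin b → ℂ)).symm ((WithLp.equiv 2 (Fin b → ℂ)) x) := rfl
      conv_lhs => rw [hx']
      rw [aux_norm_sq]
    have h3 := h _ hu0
    rw [← h1, ← h2] at h3
    have h4 : ‖T x‖ ^ 2 < (δ * ‖x‖) ^ 2 := by calc
      ‖T x‖ ^ 2 < δ ^ 2 * ‖x‖ ^ 2 := h3
      _ = (δ * ‖x‖) ^ 2 := by ring
    exact lt_of_pow_lt_pow_left₀ 2 (by positivity) h4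
  obtain ⟨x₀, hx₀, hmax⟩ := (isCompact_closedBall (0 : EuclideanSpace ℂ (Fin b)) 1).exists_isMaxOn
    ⟨0, Metric.mem_closedBall_self zero_le_one⟩
    ((continuous_norm.comp T.continuous).continuousOn)
  have hnorm : ∀ y, ‖T y‖ ≤ ‖T x₀‖ * ‖y‖ := by
    intro y
    rcases eq_or_ne y 0 with rfl | hy
    · simp
    · have hy0 : (0:ℝ) < ‖y‖ := norm_pos_iff.mpr hy
      have hmem : ((‖y‖ : ℂ))⁻¹ • y ∈ Metric.closedBall (0 : EuclideanSpace ℂ (Fin b)) 1 := by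
        rw [Metric.mem_closedBall, dist_zero_right, norm_smul, norm_inv, Complex.norm_real,
          norm_norm, inv_mul_cancel₀ hy0.ne']
      have h5 : ‖T (((‖y‖ : ℂ))⁻¹ • y)‖ ≤ ‖T x₀‖ := hmax hmem
      rw [T.map_smul, norm_smul, norm_inv, Complex.norm_real, norm_norm] at h5
      calc ‖T y‖ = ‖y‖ * (‖y‖⁻¹ * ‖T y‖) := by field_simp
        _ ≤ ‖y‖ * ‖T x₀‖ := mul_le_mul_of_nonneg_left h5 hy0.le
        _ = ‖T x₀‖ * ‖y‖ := mul_comm _ _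
  have hle : sigmaMax M ≤ ‖T x₀‖ := T.opNorm_le_bound (norm_nonneg _) hnorm
  rcases eq_or_ne x₀ 0 with rfl | hx0
  · have : ‖T (0 : EuclideanSpace ℂ (Fin b))‖ = 0 := by simp
    rw [this] at hle; linarith
  · have h6 : ‖T x₀‖ < δ * ‖x₀‖ := hTlt x₀ hx0
    have h7 : ‖x₀‖ ≤ 1 := by
      rw [Metric.mem_closedBall, dist_zero_right] at hx₀; exact hx₀
    nlinarith

lemma aux_exp_neg_pi_div_two :
    Complex.exp (((-(Real.pi/2) : ℝ) : ℂ) * Complex.I) = -Complex.I := by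
  rw [Complex.exp_mul_I, ← Complex.ofReal_cos, ← Complex.ofReal_sin]
  rw [Real.cos_neg, Real.sin_neg, Real.cos_pi_div_two, Real.sin_pi_div_two]
  push_cast
  ring

end Aux

/-- Full (infinite) frequency L∞ bound via LMI (sufficiency direction of Theorem 5). -/
theorem fos_Linf_infinite_frequency {n m p : ℕ} (ν φ δ : ℝ)
    (hν : 0 < ν) (hν2 : ν < 2) (hφ : φ = (Real.pi / 2) * (ν - 1)) (hδ : 0 < δ)
    (A : Matrix (Fin n) (Fin n) ℝ) (B : Matrix (Fin n) (Fin m) ℝ)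
    (C : Matrix (Fin p) (Fin n) ℝ) (D : Matrix (Fin p) (Fin m) ℝ)
    (U : Matrix (Fin n) (Fin n) ℂ) (hU : U.IsHermitian)
    (X : Matrix (Fin n) (Fin n) ℂ) (Y : Matrix (Fin m) (Fin n) ℂ)
    (hX : X = Complex.exp ((φ : ℂ) * Complex.I) • ((cmap A)ᵀ * U))
    (hY : Y = Complex.exp ((φ : ℂ) * Complex.I) • ((cmap B)ᵀ * U))
    (hLMI : (-(block3
      (X + Xᴴ) Yᴴ (cmap C)ᵀ
      Y (-(δ : ℂ) • 1) (cmap D)ᵀ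
      (cmap C) (cmap D) (-(δ : ℂ) • 1))).PosDef) :
    sigmaMax (cmap D) < δ ∧
    ∀ ω : ℝ, 0 ≤ ω →
      IsUnit ((((ω ^ ν : ℝ) : ℂ) * Complex.exp ((Real.pi * ν / 2 : ℝ) * Complex.I)) •
          (1 : Matrix (Fin n) (Fin n) ℂ) - cmap A) ∧
      sigmaMax (cmap C *
        ((((ω ^ ν : ℝ) : ℂ) * Complex.exp ((Real.pi * ν / 2 : ℝ) * Complex.I)) •
          (1 : Matrix (Fin n) (Fin n) ℂ) - cmap A)⁻¹ * cmap B + cmap D) < δ := by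
  have hδC : (δ : ℂ) ≠ 0 := by exact_mod_cast hδ.ne'
  set Mb := block3 (X + Xᴴ) Yᴴ (cmap C)ᵀ Y (-(δ : ℂ) • 1) (cmap D)ᵀ
      (cmap C) (cmap D) (-(δ : ℂ) • 1) with hMb
  -- core quadratic form bound
  have core : ∀ (x : Fin n → ℂ) (u : Fin m → ℂ), (x ≠ 0 ∨ u ≠ 0) →
      (star x ⬝ᵥ (X + Xᴴ) *ᵥ x + star x ⬝ᵥ Yᴴ *ᵥ u + star u ⬝ᵥ Y *ᵥ x).re = 0 →
      (star (cmap C *ᵥ x + cmap D *ᵥ u) ⬝ᵥ (cmap C *ᵥ x + cmap D *ᵥ u)).re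
        < δ ^ 2 * (star u ⬝ᵥ u).re := by
    intro x u hne hS
    set w : Fin p → ℂ := cmap C *ᵥ x + cmap D *ᵥ u with hw
    have hvne : (Sum.elim (Sum.elim x u) ((((δ⁻¹ : ℝ)) : ℂ) • w) :
        (Fin n ⊕ Fin m) ⊕ Fin p → ℂ) ≠ 0 := by
      intro h0
      rcases hne with hx | hu
      · exact hx (funext fun i => congrFun h0 (Sum.inl (Sum.inl i)))
      · exact hu (funext fun i => congrFun h0 (Sum.inl (Sum.inr i)))
    have hpos := hLMI.dotProduct_mulVec_pos hvne
    rw [Complex.lt_def] at hpos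
    have hre : (star (Sum.elim (Sum.elim x u) ((((δ⁻¹ : ℝ)) : ℂ) • w)) ⬝ᵥ
        Mb *ᵥ (Sum.elim (Sum.elim x u) ((((δ⁻¹ : ℝ)) : ℂ) • w))).re < 0 := by
      have h' := hpos.1
      rw [Matrix.neg_mulVec, dotProduct_neg, Complex.neg_re, Complex.zero_re] at h'
      linarith
    have hexp : star (Sum.elim (Sum.elim x u) ((((δ⁻¹ : ℝ)) : ℂ) • w)) ⬝ᵥ
        Mb *ᵥ (Sum.elim (Sum.elim x u) ((((δ⁻¹ : ℝ)) : ℂ) • w))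
        = (star x ⬝ᵥ (X + Xᴴ) *ᵥ x + star x ⬝ᵥ Yᴴ *ᵥ u + star u ⬝ᵥ Y *ᵥ x)
          + (star x ⬝ᵥ (cmap C)ᵀ *ᵥ ((((δ⁻¹ : ℝ)) : ℂ) • w)
            + star u ⬝ᵥ (cmap D)ᵀ *ᵥ ((((δ⁻¹ : ℝ)) : ℂ) • w)
            + star ((((δ⁻¹ : ℝ)) : ℂ) • w) ⬝ᵥ (cmap C *ᵥ x)
            + star ((((δ⁻¹ : ℝ)) : ℂ) • w) ⬝ᵥ (cmap D *ᵥ u))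
          + (star u ⬝ᵥ ((-(δ : ℂ)) • (1 : Matrix (Fin m) (Fin m) ℂ)) *ᵥ u
            + star ((((δ⁻¹ : ℝ)) : ℂ) • w) ⬝ᵥ ((-(δ : ℂ)) • (1 : Matrix (Fin p) (Fin p) ℂ)) *ᵥ
              ((((δ⁻¹ : ℝ)) : ℂ) • w)) := by
      rw [hMb]
      simp only [block3, Function.star_sumElim, Matrix.fromBlocks_mulVec,
        Matrix.fromRows_mulVec, Matrix.fromCols_mulVec_sumElim,
        sumElim_dotProduct_sumElim, dotProduct_add, Sum.elim_add_add,
        Sum.elim_comp_inl, Sum.elim_comp_inr]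
      ring
    have hCz : star x ⬝ᵥ (cmap C)ᵀ *ᵥ ((((δ⁻¹ : ℝ)) : ℂ) • w)
        = star (cmap C *ᵥ x) ⬝ᵥ ((((δ⁻¹ : ℝ)) : ℂ) • w) := by
      rw [← aux_cmap_conjT, aux_dot_conjT]
    have hDz : star u ⬝ᵥ (cmap D)ᵀ *ᵥ ((((δ⁻¹ : ℝ)) : ℂ) • w)
        = star (cmap D *ᵥ u) ⬝ᵥ ((((δ⁻¹ : ℝ)) : ℂ) • w) := by
      rw [← aux_cmap_conjT, aux_dot_conjT]
    have hval : star (Sum.elim (Sum.elim x u) ((((δ⁻¹ : ℝ)) : ℂ) • w)) ⬝ᵥ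
        Mb *ᵥ (Sum.elim (Sum.elim x u) ((((δ⁻¹ : ℝ)) : ℂ) • w))
        = (star x ⬝ᵥ (X + Xᴴ) *ᵥ x + star x ⬝ᵥ Yᴴ *ᵥ u + star u ⬝ᵥ Y *ᵥ x)
          + (((δ⁻¹ : ℝ)) : ℂ) * (star w ⬝ᵥ w) - ((δ : ℝ) : ℂ) * (star u ⬝ᵥ u) := by
      rw [hexp, hCz, hDz, hw]
      simp only [star_add, add_dotProduct, dotProduct_add, star_smul,
        smul_dotProduct, dotProduct_smul, Matrix.smul_mulVec,
        Matrix.one_mulVec, smul_eq_mul, Complex.star_def, Complex.conj_ofReal]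
      push_cast [Complex.ofReal_inv]
      field_simp
      ring
    rw [hval] at hre
    rw [Complex.sub_re, Complex.add_re, hS, Complex.re_ofReal_mul, Complex.re_ofReal_mul,
      zero_add] at hre
    have h1 : δ * (δ⁻¹ * (star w ⬝ᵥ w).re) < δ * (δ * (star u ⬝ᵥ u).re) := by
      apply mul_lt_mul_of_pos_left _ hδ
      linarith
    rw [← mul_assoc, mul_inv_cancel₀ hδ.ne', one_mul] at h1
    calc (star w ⬝ᵥ w).re < δ * (δ * (star u ⬝ᵥ u).re) := h1
      _ = δ ^ 2 * (star u ⬝ᵥ u).re := by ring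
  -- the symmetric part vanishes along the dynamics
  have hSdyn : ∀ (ω : ℝ) (x : Fin n → ℂ) (u : Fin m → ℂ),
      cmap A *ᵥ x + cmap B *ᵥ u
        = ((((ω ^ ν : ℝ) : ℂ) * Complex.exp ((Real.pi * ν / 2 : ℝ) * Complex.I))) • x →
      (star x ⬝ᵥ (X + Xᴴ) *ᵥ x + star x ⬝ᵥ Yᴴ *ᵥ u + star u ⬝ᵥ Y *ᵥ x).re = 0 := by
    intro ω x u hrel
    have hrim : (star x ⬝ᵥ U *ᵥ x).im = 0 := by
      have h1 : star x ⬝ᵥ Uᴴ *ᵥ x = star (star x ⬝ᵥ U *ᵥ x) := aux_dot_conj U x x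
      rw [hU.eq] at h1
      exact Complex.conj_eq_iff_im.mp h1.symm
    have hXx : star x ⬝ᵥ X *ᵥ x
        = Complex.exp ((φ : ℂ) * Complex.I) * (star (cmap A *ᵥ x) ⬝ᵥ (U *ᵥ x)) := by
      rw [hX, Matrix.smul_mulVec, dotProduct_smul, smul_eq_mul]
      congr 1
      rw [← Matrix.mulVec_mulVec, ← aux_cmap_conjT, aux_dot_conjT]
    have hYx : star u ⬝ᵥ Y *ᵥ x
        = Complex.exp ((φ : ℂ) * Complex.I) * (star (cmap B *ᵥ u) ⬝ᵥ (U *ᵥ x)) := by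
      rw [hY, Matrix.smul_mulVec, dotProduct_smul, smul_eq_mul]
      congr 1
      rw [← Matrix.mulVec_mulVec, ← aux_cmap_conjT, aux_dot_conjT]
    have hXH : star x ⬝ᵥ Xᴴ *ᵥ x = star (star x ⬝ᵥ X *ᵥ x) := aux_dot_conj X x x
    have hYH : star x ⬝ᵥ Yᴴ *ᵥ u = star (star u ⬝ᵥ Y *ᵥ x) := aux_dot_conj Y u x
    have hAB : star (cmap A *ᵥ x) ⬝ᵥ (U *ᵥ x) + star (cmap B *ᵥ u) ⬝ᵥ (U *ᵥ x)
        = (starRingEnd ℂ) (((ω ^ ν : ℝ) : ℂ) * Complex.exp ((Real.pi * ν / 2 : ℝ) * Complex.I))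
          * (star x ⬝ᵥ U *ᵥ x) := by
      rw [← add_dotProduct, ← star_add, hrel, star_smul, smul_dotProduct,
        smul_eq_mul, Complex.star_def]
    have hsum : star x ⬝ᵥ (X + Xᴴ) *ᵥ x + star x ⬝ᵥ Yᴴ *ᵥ u + star u ⬝ᵥ Y *ᵥ x
        = (Complex.exp ((φ : ℂ) * Complex.I)
            * ((starRingEnd ℂ) (((ω ^ ν : ℝ) : ℂ)
              * Complex.exp ((Real.pi * ν / 2 : ℝ) * Complex.I)))
            * (star x ⬝ᵥ U *ᵥ x))
          + star (Complex.exp ((φ : ℂ) * Complex.I)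
            * ((starRingEnd ℂ) (((ω ^ ν : ℝ) : ℂ)
              * Complex.exp ((Real.pi * ν / 2 : ℝ) * Complex.I)))
            * (star x ⬝ᵥ U *ᵥ x)) := by
      rw [Matrix.add_mulVec, dotProduct_add, hXH, hYH, hXx, hYx]
      rw [mul_assoc _ _ (star x ⬝ᵥ U *ᵥ x), ← hAB, mul_add, star_add]
      ring
    rw [hsum]
    have hclam : Complex.exp ((φ : ℂ) * Complex.I)
        * (starRingEnd ℂ) (((ω ^ ν : ℝ) : ℂ) * Complex.exp ((Real.pi * ν / 2 : ℝ) * Complex.I))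
        = ((ω ^ ν : ℝ) : ℂ) * -Complex.I := by
      rw [_root_.map_mul, Complex.conj_ofReal, ← Complex.exp_conj, _root_.map_mul, Complex.conj_I,
        Complex.conj_ofReal, mul_left_comm]
      congr 1
      rw [← Complex.exp_add]
      have harg : (φ : ℂ) * Complex.I + ((Real.pi * ν / 2 : ℝ) : ℂ) * -Complex.I
          = ((-(Real.pi/2) : ℝ) : ℂ) * Complex.I := by
        push_cast [hφ]; ring
      rw [harg, aux_exp_neg_pi_div_two]
    rw [hclam]
    rw [Complex.add_re, Complex.star_def, Complex.conj_re]
    have hzero : (((ω ^ ν : ℝ) : ℂ) * -Complex.I * (star x ⬝ᵥ U *ᵥ x)).re = 0 := by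
      simp [Complex.mul_re, Complex.mul_im, hrim]
    linarith
  refine ⟨?_, ?_⟩
  · refine aux_sigmaMax_lt _ hδ ?_
    intro u hu
    have h0 : (star (0 : Fin n → ℂ) ⬝ᵥ (X + Xᴴ) *ᵥ (0 : Fin n → ℂ)
        + star (0 : Fin n → ℂ) ⬝ᵥ Yᴴ *ᵥ u + star u ⬝ᵥ Y *ᵥ (0 : Fin n → ℂ)).re = 0 := by
      simp
    have hc := core 0 u (Or.inr hu) h0
    simpa using hc
  · intro ω hω
    have hunit : IsUnit ((((ω ^ ν : ℝ) : ℂ) * Complex.exp ((Real.pi * ν / 2 : ℝ) * Complex.I)) •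
        (1 : Matrix (Fin n) (Fin n) ℂ) - cmap A) := by
      rw [Matrix.isUnit_iff_isUnit_det, isUnit_iff_ne_zero]
      intro hdet
      obtain ⟨xk, hxk, hxk0⟩ := Matrix.exists_mulVec_eq_zero_iff.mpr hdet
      have hrel : cmap A *ᵥ xk + cmap B *ᵥ (0 : Fin m → ℂ)
          = ((((ω ^ ν : ℝ) : ℂ) * Complex.exp ((Real.pi * ν / 2 : ℝ) * Complex.I))) • xk := by
        rw [Matrix.mulVec_zero, add_zero]
        rw [Matrix.sub_mulVec, Matrix.smul_mulVec, Matrix.one_mulVec, sub_eq_zero] at hxk0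
        exact hxk0.symm
      have hc := core xk 0 (Or.inl hxk) (hSdyn ω xk 0 hrel)
      have hge := aux_re_dot_self_nonneg (cmap C *ᵥ xk + cmap D *ᵥ (0 : Fin m → ℂ))
      simp only [dotProduct_zero, star_zero, zero_dotProduct, Complex.zero_re,
        mul_zero] at hc
      linarith
    refine ⟨hunit, ?_⟩
    refine aux_sigmaMax_lt _ hδ ?_
    intro u hu
    have hdet : IsUnit ((((ω ^ ν : ℝ) : ℂ) * Complex.exp ((Real.pi * ν / 2 : ℝ) * Complex.I)) •
        (1 : Matrix (Fin n) (Fin n) ℂ) - cmap A).det := (Matrix.isUnit_iff_isUnit_det _).mp hunit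
    have hMx : ((((ω ^ ν : ℝ) : ℂ) * Complex.exp ((Real.pi * ν / 2 : ℝ) * Complex.I)) •
        (1 : Matrix (Fin n) (Fin n) ℂ) - cmap A) *ᵥ
        (((((ω ^ ν : ℝ) : ℂ) * Complex.exp ((Real.pi * ν / 2 : ℝ) * Complex.I)) •
          (1 : Matrix (Fin n) (Fin n) ℂ) - cmap A)⁻¹ *ᵥ (cmap B *ᵥ u)) = cmap B *ᵥ u := by
      rw [Matrix.mulVec_mulVec, Matrix.mul_nonsing_inv _ hdet, Matrix.one_mulVec]
    set x : Fin n → ℂ := ((((ω ^ ν : ℝ) : ℂ) * Complex.exp ((Real.pi * ν / 2 : ℝ) * Complex.I)) •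
        (1 : Matrix (Fin n) (Fin n) ℂ) - cmap A)⁻¹ *ᵥ (cmap B *ᵥ u) with hxdef
    have hrel : cmap A *ᵥ x + cmap B *ᵥ u
        = ((((ω ^ ν : ℝ) : ℂ) * Complex.exp ((Real.pi * ν / 2 : ℝ) * Complex.I))) • x := by
      rw [← hMx, Matrix.sub_mulVec, Matrix.smul_mulVec, Matrix.one_mulVec]
      abel
    have hc := core x u (Or.inr hu) (hSdyn ω x u hrel)
    have hGu : (cmap C * ((((ω ^ ν : ℝ) : ℂ) * Complex.exp ((Real.pi * ν / 2 : ℝ) * Complex.I)) •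
        (1 : Matrix (Fin n) (Fin n) ℂ) - cmap A)⁻¹ * cmap B + cmap D) *ᵥ u
        = cmap C *ᵥ x + cmap D *ᵥ u := by
      rw [Matrix.add_mulVec, hxdef]
      rw [← Matrix.mulVec_mulVec, ← Matrix.mulVec_mulVec]
    rw [hGu]
    exact hc
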